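/- Let k ≥ 1 and for each i ∈ ℤ/k let c_i be a finitely supported ℚ-valued function on pairs of partitions. Then the vacuum expectation value of the abnormally ordered product ⟨; ∏_{i∈ℤ/k} (∑_{(μ⁺,μ⁻)} c_i(μ⁺,μ⁻)·β_{i,μ⁺}·β_{i−1,−μ⁻}) ;⟩ equals ∑_{(ν_0,…,ν_{k−1})} ∏_{i∈ℤ/k} c_i(ν_i, ν_{i−1})·z_{ν_i}, where the sum is over all k-tuples of partitions. -/

import Mathlib

open MvPolynomial

/-! ## The free boson system with `k` colors -/

/-- `Λ_k`, the polynomial ring over `ℚ` in the variables `p_{i,n}`, `i ∈ ℤ/k`, `n ≥ 1`. -/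
abbrev LambdaK (k : ℕ) : Type := MvPolynomial (ZMod k × ℕ+) ℚ

/-- The bosonic operators: `β_{i,n} f = p_{i,−n}·f` for `n < 0`, `β_{i,0} = 0`,
`β_{i,n} f = n·∂f/∂p_{i,n}` for `n > 0`. -/
noncomputable def bbeta {k : ℕ} (i : ZMod k) (n : ℤ) : Module.End ℚ (LambdaK k) :=
  if h : n < 0 then
    LinearMap.mulLeft ℚ (X (i, (⟨n.natAbs, Int.natAbs_pos.mpr (by omega)⟩ : ℕ+)))
  else if h' : 0 < n then
    (n : ℚ) • (pderiv (i, (⟨n.natAbs, Int.natAbs_pos.mpr (by omega)⟩ : ℕ+))).toLinearMap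
  else 0

lemma pderiv_pderiv_comm {σ : Type*} (i j : σ) (p : MvPolynomial σ ℚ) :
    pderiv i (pderiv j p) = pderiv j (pderiv i p) := by
  classical
  induction p using MvPolynomial.induction_on with
  | C a => simp
  | add p q hp hq => simp [hp, hq]
  | mul_X p s ih =>
    simp only [pderiv_mul, map_add, ih, pderiv_X, Pi.single_apply]
    split_ifs <;> simp <;> ring

lemma bbeta_zero {k : ℕ} (i : ZMod k) : bbeta i 0 = 0 := by simp [bbeta]

lemma bbeta_of_pos {k : ℕ} (i : ZMod k) {n : ℤ} (h : 0 < n) :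
    bbeta i n =
      ((n : ℚ) • (pderiv (i, (⟨n.natAbs, Int.natAbs_pos.mpr (by omega)⟩ : ℕ+))).toLinearMap :
        Module.End ℚ (LambdaK k)) := by
  rw [bbeta, dif_neg (by omega), dif_pos h]

lemma bbeta_of_neg {k : ℕ} (i : ZMod k) {n : ℤ} (h : n < 0) :
    bbeta i n =
      LinearMap.mulLeft ℚ (X (i, (⟨n.natAbs, Int.natAbs_pos.mpr (by omega)⟩ : ℕ+)) : LambdaK k) := by
  rw [bbeta, dif_pos h]

/-- Operators `β_{i,m}`, `β_{j,n}` with `m, n ≥ 0` commute. -/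
lemma bbeta_nonneg_commute {k : ℕ} {i j : ZMod k} {m n : ℤ} (hm : 0 ≤ m) (hn : 0 ≤ n) :
    Commute (bbeta i m) (bbeta j n) := by
  rcases hm.eq_or_lt with rfl | h1
  · rw [bbeta_zero]; exact Commute.zero_left _
  rcases hn.eq_or_lt with rfl | h2
  · rw [bbeta_zero]; exact Commute.zero_right _
  rw [bbeta_of_pos i h1, bbeta_of_pos j h2]
  have key : ∀ (σ : Type) (a b : σ) (r s : ℚ), Commute
      (r • (pderiv a).toLinearMap : Module.End ℚ (MvPolynomial σ ℚ)) (s • (pderiv b).toLinearMap) := by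
    intro σ a b r s
    refine (Commute.smul_left ?_ _).smul_right _
    refine LinearMap.ext fun p => ?_
    exact pderiv_pderiv_comm _ _ p
  exact key _ _ _ _ _

/-- Operators `β_{i,m}`, `β_{j,n}` with `m, n ≤ 0` commute. -/
lemma bbeta_nonpos_commute {k : ℕ} {i j : ZMod k} {m n : ℤ} (hm : m ≤ 0) (hn : n ≤ 0) :
    Commute (bbeta i m) (bbeta j n) := by
  rcases hm.lt_or_eq with h1 | rfl
  swap
  · rw [bbeta_zero]; exact Commute.zero_left _
  rcases hn.lt_or_eq with h2 | rfl
  swap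
  · rw [bbeta_zero]; exact Commute.zero_right _
  rw [bbeta_of_neg i h1, bbeta_of_neg j h2]
  refine LinearMap.ext fun p => ?_
  simp only [Module.End.mul_apply, LinearMap.mulLeft_apply]
  ring

/-- For a partition `μ` (the multiset of its parts),
`β_{i,μ} = β_{i,μ_1} ∘ ⋯ ∘ β_{i,μ_l}` (positive-index operators commute, so the
order of composition is immaterial). -/
noncomputable def betaP {k : ℕ} (i : ZMod k) (μ : Multiset ℕ+) : Module.End ℚ (LambdaK k) :=
  (μ.map fun a : ℕ+ => bbeta i ((a : ℕ) : ℤ)).noncommProd (by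
    intro x hx y hy _
    obtain ⟨a, _, rfl⟩ := Multiset.mem_map.mp hx
    obtain ⟨b, _, rfl⟩ := Multiset.mem_map.mp hy
    exact bbeta_nonneg_commute (Int.natCast_nonneg _) (Int.natCast_nonneg _))

/-- For a partition `μ` (the multiset of its parts),
`β_{i,−μ} = β_{i,−μ_1} ∘ ⋯ ∘ β_{i,−μ_l}`. -/
noncomputable def betaN {k : ℕ} (i : ZMod k) (μ : Multiset ℕ+) : Module.End ℚ (LambdaK k) :=
  (μ.map fun a : ℕ+ => bbeta i (-((a : ℕ) : ℤ))).noncommProd (by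
    intro x hx y hy _
    obtain ⟨a, _, rfl⟩ := Multiset.mem_map.mp hx
    obtain ⟨b, _, rfl⟩ := Multiset.mem_map.mp hy
    exact bbeta_nonpos_commute (by simp) (by simp))

/-- Any two of the operators `β_{i,μ}` (with positive indices) commute. -/
lemma commute_betaP {k : ℕ} (i j : ZMod k) (μ ν : Multiset ℕ+) :
    Commute (betaP i μ) (betaP j ν) := by
  refine Multiset.noncommProd_commute _ _ _ fun x hx => ?_
  obtain ⟨b, _, rfl⟩ := Multiset.mem_map.mp hx
  refine (Multiset.noncommProd_commute _ _ _ fun y hy => ?_).symm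
  obtain ⟨a, _, rfl⟩ := Multiset.mem_map.mp hy
  exact bbeta_nonneg_commute (Int.natCast_nonneg _) (Int.natCast_nonneg _)

/-- Any two of the operators `β_{i,−μ}` (with negative indices) commute. -/
lemma commute_betaN {k : ℕ} (i j : ZMod k) (μ ν : Multiset ℕ+) :
    Commute (betaN i μ) (betaN j ν) := by
  refine Multiset.noncommProd_commute _ _ _ fun x hx => ?_
  obtain ⟨b, _, rfl⟩ := Multiset.mem_map.mp hx
  refine (Multiset.noncommProd_commute _ _ _ fun y hy => ?_).symm
  obtain ⟨a, _, rfl⟩ := Multiset.mem_map.mp hy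
  exact bbeta_nonpos_commute (by simp) (by simp)

/-- The vacuum expectation value `⟨A⟩`: the coefficient of the constant monomial
in `A(1) ∈ Λ_k`. -/
noncomputable def vevK {k : ℕ} (A : Module.End ℚ (LambdaK k)) : ℚ := constantCoeff (A 1)

/-- For a partition `μ`, `z_μ = ∏_k k^{m_k}·m_k!`. -/
noncomputable def zPart (μ : Multiset ℕ+) : ℚ :=
  ∏ a ∈ μ.toFinset, (((a : ℕ) : ℚ) ^ μ.count a * (μ.count a).factorial)

/-- `|μ| = ∑ μ_i`, the size of a partition. -/
def pSize (μ : Multiset ℕ+) : ℕ := (μ.map fun a : ℕ+ => (a : ℕ)).sum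

/-- Given a choice `φ` of a pair of partitions for each color `i`, the product
`∏_{i ∈ ℤ/k} β_{i,φ(i)⁺}` of the positive-index operators. -/
noncomputable def prodBetaP {k : ℕ} [NeZero k]
    (φ : ZMod k → Multiset ℕ+ × Multiset ℕ+) : Module.End ℚ (LambdaK k) :=
  Finset.univ.noncommProd (fun i => betaP i (φ i).1)
    (fun x _ y _ _ => commute_betaP x y (φ x).1 (φ y).1)

/-- Given a choice `φ` of a pair of partitions for each color `i`, the product
`∏_{i ∈ ℤ/k} β_{i−1,−φ(i)⁻}` of the negative-index operators. -/
noncomputable def prodBetaN {k : ℕ} [NeZero k]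
    (φ : ZMod k → Multiset ℕ+ × Multiset ℕ+) : Module.End ℚ (LambdaK k) :=
  Finset.univ.noncommProd (fun i => betaN (i - 1) (φ i).2)
    (fun x _ y _ _ => commute_betaN (x - 1) (y - 1) (φ x).2 (φ y).2)

/-! ### Auxiliary development -/

section Aux

variable {k : ℕ}

lemma pnat_mk_natAbs (a : ℕ+) (h) : (⟨(((a:ℕ):ℤ)).natAbs, h⟩ : ℕ+) = a :=
  Subtype.ext (Int.natAbs_natCast _)

lemma bbeta_pnat (i : ZMod k) (a : ℕ+) :
    bbeta i ((a : ℕ) : ℤ) = (((a:ℕ)) : ℚ) • (pderiv (i, a)).toLinearMap := by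
  rw [bbeta_of_pos i (by exact_mod_cast a.pos), pnat_mk_natAbs]
  congr 1

lemma bbeta_pnat_neg (i : ZMod k) (a : ℕ+) :
    bbeta i (-((a : ℕ) : ℤ)) = LinearMap.mulLeft ℚ (X (i, a)) := by
  have hp : (0:ℤ) < ((a:ℕ):ℤ) := by exact_mod_cast a.pos
  rw [bbeta_of_neg i (by omega)]
  have hmk : ∀ h, (⟨(-((a:ℕ):ℤ)).natAbs, h⟩ : ℕ+) = a := fun h =>
    Subtype.ext (show (-((a:ℕ):ℤ)).natAbs = (a:ℕ) by
      rw [Int.natAbs_neg]; exact Int.natAbs_natCast _)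
  rw [hmk]

/-- The exponent finsupp of the monomial `∏_{a ∈ μ} p_{i,a}`. -/
noncomputable def Ee (i : ZMod k) (μ : Multiset ℕ+) : (ZMod k × ℕ+) →₀ ℕ :=
  (μ.map fun a => Finsupp.single (i, a) 1).sum

lemma Ee_zero (i : ZMod k) : Ee i 0 = 0 := by simp [Ee]

lemma Ee_cons (i : ZMod k) (a : ℕ+) (μ : Multiset ℕ+) :
    Ee i (a ::ₘ μ) = Finsupp.single (i, a) 1 + Ee i μ := by
  simp [Ee]

lemma Ee_apply (i : ZMod k) (μ : Multiset ℕ+) (j : ZMod k) (b : ℕ+) :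
    Ee i μ (j, b) = if j = i then μ.count b else 0 := by
  induction μ using Multiset.induction with
  | empty => simp [Ee]
  | cons a μ ih =>
    rw [Ee_cons, Finsupp.add_apply, ih]
    by_cases hj : j = i
    · subst hj
      rw [if_pos rfl, if_pos rfl, Multiset.count_cons]
      by_cases hb : b = a
      · subst hb
        rw [Finsupp.single_apply, if_pos rfl, if_pos rfl]
        omega
      · rw [Finsupp.single_apply, if_neg (fun h => hb (congrArg Prod.snd h).symm), if_neg hb]
        omega
    · rw [if_neg hj, if_neg hj, Finsupp.single_apply,
        if_neg (fun h => hj (congrArg Prod.fst h).symm), add_zero]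

lemma zPart_zero : zPart 0 = 1 := by simp [zPart]

lemma zPart_cons (a : ℕ+) (μ : Multiset ℕ+) :
    zPart (a ::ₘ μ) = ((a:ℕ):ℚ) * ((μ.count a : ℚ) + 1) * zPart μ := by
  classical
  unfold zPart
  rw [Multiset.toFinset_cons]
  by_cases ha : a ∈ μ.toFinset
  · rw [Finset.insert_eq_self.mpr ha,
      ← Finset.mul_prod_erase _ _ ha, ← Finset.mul_prod_erase _ _ ha,
      Finset.prod_congr rfl (fun b hb => by
        rw [Multiset.count_cons, if_neg (Finset.ne_of_mem_erase hb), add_zero]),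
      Multiset.count_cons_self]
    push_cast [pow_succ, Nat.factorial_succ]
    ring
  · rw [Finset.prod_insert ha, Multiset.count_cons_self,
      Finset.prod_congr rfl (fun b hb => by
        rw [Multiset.count_cons, if_neg (by rintro rfl; exact ha hb), add_zero]),
      Multiset.count_eq_zero_of_notMem (by simpa using ha)]
    push_cast [Nat.factorial]
    ring

lemma betaP_zero (i : ZMod k) : betaP i 0 = 1 := by
  simp [betaP]

lemma betaP_cons (i : ZMod k) (a : ℕ+) (μ : Multiset ℕ+) :
    betaP i (a ::ₘ μ) = bbeta i ((a:ℕ):ℤ) * betaP i μ := by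
  unfold betaP
  simp only [Multiset.map_cons]
  rw [Multiset.noncommProd_cons]

lemma betaP_cons' (i : ZMod k) (a : ℕ+) (μ : Multiset ℕ+) :
    betaP i (a ::ₘ μ) = betaP i μ * bbeta i ((a:ℕ):ℤ) := by
  rw [betaP_cons]
  have hcomm : Commute (bbeta i ((a:ℕ):ℤ)) (betaP i μ) := by
    unfold betaP
    refine Multiset.noncommProd_commute _ _ _ fun x hx => ?_
    obtain ⟨b, _, rfl⟩ := Multiset.mem_map.mp hx
    exact bbeta_nonneg_commute (Int.natCast_nonneg _) (Int.natCast_nonneg _)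
  exact hcomm.eq

lemma betaN_zero (i : ZMod k) : betaN i 0 = 1 := by
  simp [betaN]

lemma betaN_cons (i : ZMod k) (a : ℕ+) (μ : Multiset ℕ+) :
    betaN i (a ::ₘ μ) = bbeta i (-((a:ℕ):ℤ)) * betaN i μ := by
  unfold betaN
  simp only [Multiset.map_cons]
  rw [Multiset.noncommProd_cons]

lemma betaN_monomial (i : ZMod k) (μ : Multiset ℕ+) (d : (ZMod k × ℕ+) →₀ ℕ) (r : ℚ) :
    betaN i μ (monomial d r) = monomial (Ee i μ + d) r := by
  induction μ using Multiset.induction with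
  | empty => rw [betaN_zero, Ee_zero, zero_add]; rfl
  | cons a μ ih =>
    have hX : (X (i, a) : LambdaK k) = monomial (Finsupp.single (i, a) 1) 1 := rfl
    rw [betaN_cons, Module.End.mul_apply, ih, bbeta_pnat_neg, LinearMap.mulLeft_apply,
      hX, monomial_mul, Ee_cons, one_mul, add_assoc]

lemma betaP_monomial (i : ZMod k) (μ : Multiset ℕ+) (d : (ZMod k × ℕ+) →₀ ℕ) :
    ∃ w : ℚ,
      (∀ r : ℚ, betaP i μ (monomial d r) = monomial (d - Ee i μ) (r * w)) ∧
      (¬ Ee i μ ≤ d → w = 0) ∧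
      ((∀ b : ℕ+, d (i, b) = μ.count b) → w = zPart μ) := by
  induction μ using Multiset.induction generalizing d with
  | empty =>
    refine ⟨1, fun r => ?_, fun h => absurd (by rw [Ee_zero]; exact zero_le) h, fun _ => ?_⟩
    · rw [betaP_zero, Ee_zero, tsub_zero, mul_one]; rfl
    · rw [zPart_zero]
  | cons a μ ih =>
    obtain ⟨w', h1, h2, h3⟩ := ih (d - Finsupp.single (i, a) 1)
    refine ⟨((a:ℕ):ℚ) * (d (i, a) : ℚ) * w', fun r => ?_, fun hle => ?_, fun hd => ?_⟩
    · have hb : bbeta i ((a:ℕ):ℤ) (monomial d r)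
          = monomial (d - Finsupp.single (i, a) 1) (r * (((a:ℕ):ℚ) * (d (i, a) : ℚ))) := by
        rw [bbeta_pnat]
        have hco : ((pderiv (i,a)).toLinearMap : LambdaK k →ₗ[ℚ] LambdaK k) (monomial d r)
            = pderiv (i,a) (monomial d r) := rfl
        rw [LinearMap.smul_apply, hco, pderiv_monomial, smul_monomial, smul_eq_mul]
        congr 1
        ring
      rw [betaP_cons', Module.End.mul_apply, hb, h1, Ee_cons, tsub_tsub]
      congr 1
      ring
    · rcases Nat.eq_zero_or_pos (d (i, a)) with h0 | hpos
      · rw [h0]; simp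
      · have hs : Finsupp.single (i, a) 1 ≤ d := Finsupp.single_le_iff.mpr hpos
        have hnle : ¬ Ee i μ ≤ d - Finsupp.single (i, a) 1 := by
          intro hh
          exact hle (by rw [Ee_cons]; exact (le_tsub_iff_left hs).mp hh)
        rw [h2 hnle]; ring
    · have hda : d (i, a) = μ.count a + 1 := by
        rw [hd a, Multiset.count_cons_self]
      have hcount : ∀ b : ℕ+,
          ((d - Finsupp.single (i, a) 1 : (ZMod k × ℕ+) →₀ ℕ)) (i, b) = μ.count b := by
        intro b
        rw [Finsupp.tsub_apply, hd b, Multiset.count_cons, Finsupp.single_apply]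
        by_cases hb : b = a
        · subst hb; simp
        · rw [if_neg hb, if_neg (fun h => hb (congrArg Prod.snd h).symm), add_zero,
            Nat.sub_zero]
      rw [h3 hcount, hda, zPart_cons]
      push_cast
      ring

end Aux

section Main

variable {k : ℕ}

lemma constantCoeff_prodP (g : ZMod k → Multiset ℕ+) (s : Finset (ZMod k)) :
    ∀ (comm : (↑s : Set (ZMod k)).Pairwise (Function.onFun Commute fun i => betaP i (g i)))
      (d : (ZMod k × ℕ+) →₀ ℕ) (r : ℚ),
      constantCoeff ((s.noncommProd (fun i => betaP i (g i)) comm) (monomial d r)) =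
        if d = ∑ i ∈ s, Ee i (g i) then r * ∏ i ∈ s, zPart (g i) else 0 := by
  classical
  induction s using Finset.induction_on with
  | empty =>
    intro comm d r
    rw [Finset.noncommProd_empty]
    simp [constantCoeff_monomial, eq_comm]
  | @insert a s ha ih =>
    intro comm d r
    rw [Finset.noncommProd_insert_of_notMem' _ _ _ _ ha, Module.End.mul_apply]
    obtain ⟨w, h1, h2, h3⟩ := betaP_monomial a (g a) d
    rw [h1 r, ih _ _ _, Finset.sum_insert ha, Finset.prod_insert ha]
    by_cases hc : d = Ee a (g a) + ∑ i ∈ s, Ee i (g i)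
    · have hsub : d - Ee a (g a) = ∑ i ∈ s, Ee i (g i) := by
        rw [hc, add_tsub_cancel_left]
      rw [if_pos hsub, if_pos hc]
      have hw : w = zPart (g a) := by
        apply h3
        intro b
        rw [hc, Finsupp.add_apply, Ee_apply, if_pos rfl, Finsupp.finset_sum_apply,
          Finset.sum_eq_zero, add_zero]
        intro i hi
        rw [Ee_apply, if_neg (by rintro rfl; exact ha hi)]
      rw [hw]; ring
    · rw [if_neg hc]
      by_cases hd : d - Ee a (g a) = ∑ i ∈ s, Ee i (g i)
      · rw [if_pos hd]
        have hnle : ¬ Ee a (g a) ≤ d := fun hle =>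
          hc (by rw [← add_tsub_cancel_of_le hle, hd])
        rw [h2 hnle]; ring
      · rw [if_neg hd]

lemma prodN_apply [NeZero k] (φ : ZMod k → Multiset ℕ+ × Multiset ℕ+) (s : Finset (ZMod k)) :
    ∀ (comm : (↑s : Set (ZMod k)).Pairwise
        (Function.onFun Commute fun i => betaN (i - 1) (φ i).2))
      (d : (ZMod k × ℕ+) →₀ ℕ) (r : ℚ),
      (s.noncommProd (fun i => betaN (i - 1) (φ i).2) comm) (monomial d r) =
        monomial ((∑ i ∈ s, Ee (i - 1) ((φ i).2)) + d) r := by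
  classical
  induction s using Finset.induction_on with
  | empty =>
    intro comm d r
    rw [Finset.noncommProd_empty, Finset.sum_empty, zero_add]
    rfl
  | @insert a s ha ih =>
    intro comm d r
    rw [Finset.noncommProd_insert_of_notMem _ _ _ _ ha, Module.End.mul_apply, ih _ _ _,
      betaN_monomial, Finset.sum_insert ha, add_assoc]

lemma vev_compute [NeZero k] (φ : ZMod k → Multiset ℕ+ × Multiset ℕ+) :
    vevK (prodBetaP φ * prodBetaN φ) =
      if ∀ j : ZMod k, (φ (j + 1)).2 = (φ j).1 then ∏ i : ZMod k, zPart ((φ i).1) else 0 := by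
  classical
  rw [vevK, Module.End.mul_apply]
  have h1 : (1 : LambdaK k) = monomial 0 1 := by
    rw [monomial_zero', C_1]
  have hN : prodBetaN φ (monomial 0 1) =
      monomial ((∑ i : ZMod k, Ee (i - 1) ((φ i).2)) + 0) 1 := prodN_apply φ _ _ 0 1
  have hP : ∀ d r, constantCoeff (prodBetaP φ (monomial d r)) =
      if d = ∑ i : ZMod k, Ee i ((φ i).1) then r * ∏ i : ZMod k, zPart ((φ i).1) else 0 :=
    fun d r => constantCoeff_prodP _ _ _ d r
  rw [h1, hN, add_zero, hP]
  have hcond : ((∑ i : ZMod k, Ee (i - 1) ((φ i).2)) = ∑ i : ZMod k, Ee i ((φ i).1)) ↔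
      ∀ j : ZMod k, (φ (j + 1)).2 = (φ j).1 := by
    constructor
    · intro h j
      ext b
      have := congrArg (fun f : (ZMod k × ℕ+) →₀ ℕ => f (j, b)) h
      simp only [Finsupp.finset_sum_apply] at this
      rw [Finset.sum_eq_single (j + 1), Finset.sum_eq_single j] at this
      · rwa [Ee_apply, Ee_apply, if_pos (by ring), if_pos rfl] at this
      · intro i _ hi
        rw [Ee_apply, if_neg (fun h' : j = i => hi h'.symm)]
      · intro h'; exact absurd (Finset.mem_univ j) h'
      · intro i _ hi
        rw [Ee_apply, if_neg (fun h' : j = i - 1 => hi (by rw [h']; ring))]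
      · intro h'; exact absurd (Finset.mem_univ (j + 1)) h'
    · intro h
      rw [Fintype.sum_equiv (Equiv.subRight (1 : ZMod k))
        (fun i => Ee (i - 1) ((φ i).2)) (fun j => Ee j ((φ (j + 1)).2))
        (fun i => by simp [Equiv.subRight, sub_add_cancel])]
      exact Finset.sum_congr rfl fun j _ => by rw [h j]
  by_cases hc : ∀ j : ZMod k, (φ (j + 1)).2 = (φ j).1
  · rw [if_pos (hcond.mpr hc), if_pos hc, one_mul]
  · rw [if_neg (fun h => hc (hcond.mp h)), if_neg hc]

end Main

/-- For finitely supported coefficients `c_i` on pairs of partitions,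
`⟨; ∏_{i∈ℤ/k} (∑_{(μ⁺,μ⁻)} c_i(μ⁺,μ⁻) β_{i,μ⁺} β_{i−1,−μ⁻}) ;⟩
  = ∑_{(ν_0,…,ν_{k−1})} ∏_{i∈ℤ/k} c_i(ν_i, ν_{i−1})·z_{ν_i}`,
the sum on the right being over all `k`-tuples of partitions.  (On the left the
abnormally ordered product is expanded multilinearly: it is the sum over all choices
`φ` of one pair of partitions for each color of the corresponding coefficient times
the vev of the abnormally ordered product of the chosen operators.) -/
theorem vev_abnormal_prod_sum (k : ℕ) [NeZero k]
    (c : ZMod k → Multiset ℕ+ × Multiset ℕ+ → ℚ)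
    (hfin : ∀ i, (Function.support (c i)).Finite) :
    ∑ᶠ φ : ZMod k → Multiset ℕ+ × Multiset ℕ+,
        (∏ i : ZMod k, c i (φ i)) * vevK (prodBetaP φ * prodBetaN φ) =
      ∑ᶠ ν : ZMod k → Multiset ℕ+,
        ∏ i : ZMod k, (c i (ν i, ν (i - 1)) * zPart (ν i)) := by
  classical
  set f : (ZMod k → Multiset ℕ+ × Multiset ℕ+) → ℚ :=
    fun φ => (∏ i : ZMod k, c i (φ i)) * vevK (prodBetaP φ * prodBetaN φ) with hf
  set g : (ZMod k → Multiset ℕ+) → ℚ :=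
    fun ν => ∏ i : ZMod k, (c i (ν i, ν (i - 1)) * zPart (ν i)) with hg
  have hfact : ∀ φ, f φ ≠ 0 → ∀ i : ZMod k, c i (φ i) ≠ 0 := by
    intro φ hφ i h0
    apply hφ
    show (∏ i : ZMod k, c i (φ i)) * vevK (prodBetaP φ * prodBetaN φ) = 0
    rw [Finset.prod_eq_zero (Finset.mem_univ i) h0, zero_mul]
  have hgact : ∀ ν, g ν ≠ 0 → ∀ i : ZMod k, c i (ν i, ν (i - 1)) ≠ 0 := by
    intro ν hν i h0
    apply hν
    show (∏ i : ZMod k, c i (ν i, ν (i - 1)) * zPart (ν i)) = 0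
    exact Finset.prod_eq_zero (Finset.mem_univ i) (by rw [h0, zero_mul])
  have hfs : (Function.support f).Finite := by
    refine Set.Finite.subset (Set.Finite.pi (t := fun i => Function.support (c i))
      (fun i => hfin i)) ?_
    intro φ hφ
    rw [Set.mem_pi]
    exact fun i _ => hfact φ hφ i
  have hgs : (Function.support g).Finite := by
    refine Set.Finite.subset (Set.Finite.pi
      (t := fun i => Prod.fst '' Function.support (c i))
      (fun i => (hfin i).image _)) ?_
    intro ν hν
    rw [Set.mem_pi]
    exact fun i _ => ⟨(ν i, ν (i - 1)), hgact ν hν i, rfl⟩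
  have hCond : ∀ φ, f φ ≠ 0 → ∀ j : ZMod k, (φ (j + 1)).2 = (φ j).1 := by
    intro φ hφ
    by_contra hc
    apply hφ
    show (∏ i : ZMod k, c i (φ i)) * vevK (prodBetaP φ * prodBetaN φ) = 0
    rw [vev_compute, if_neg hc, mul_zero]
  have key1 : ∀ φ, (∀ j : ZMod k, (φ (j + 1)).2 = (φ j).1) → f φ = g (fun j => (φ j).1) := by
    intro φ hcond
    have hsnd : ∀ i : ZMod k, (φ (i - 1)).1 = (φ i).2 := by
      intro i
      rw [← hcond (i - 1), sub_add_cancel]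
    show (∏ i : ZMod k, c i (φ i)) * vevK (prodBetaP φ * prodBetaN φ)
        = ∏ i : ZMod k, c i ((φ i).1, (φ (i - 1)).1) * zPart ((φ i).1)
    rw [vev_compute, if_pos hcond, ← Finset.prod_mul_distrib]
    refine Finset.prod_congr rfl fun i _ => ?_
    rw [hsnd i, Prod.mk.eta]
  have key2 : ∀ ν : ZMod k → Multiset ℕ+,
      f (fun j => (ν j, ν (j - 1))) = g ν := by
    intro ν
    have hcond : ∀ j : ZMod k, ((fun j => (ν j, ν (j - 1))) (j + 1)).2 =
        ((fun j => (ν j, ν (j - 1))) j).1 := by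
      intro j; simp only; rw [add_sub_cancel_right]
    rw [key1 _ hcond]
  rw [finsum_eq_sum f hfs, finsum_eq_sum g hgs]
  refine Finset.sum_nbij' (fun φ => fun j => (φ j).1) (fun ν => fun j => (ν j, ν (j - 1)))
    ?_ ?_ ?_ ?_ ?_
  · intro φ hφ
    rw [Set.Finite.mem_toFinset, Function.mem_support] at hφ ⊢
    rw [← key1 φ (hCond φ hφ)]
    exact hφ
  · intro ν hν
    rw [Set.Finite.mem_toFinset, Function.mem_support] at hν ⊢
    rw [key2 ν]
    exact hν
  · intro φ hφ
    rw [Set.Finite.mem_toFinset, Function.mem_support] at hφ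
    funext j
    have hsnd := hCond φ hφ (j - 1)
    rw [sub_add_cancel] at hsnd
    show ((φ j).1, (φ (j - 1)).1) = φ j
    exact Prod.ext rfl hsnd.symm
  · intro ν _
    rfl
  · intro φ hφ
    rw [Set.Finite.mem_toFinset, Function.mem_support] at hφ
    exact key1 φ (hCond φ hφ)
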